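/- Let e¹, e² be unit vectors in ℝ³ with e¹·e² = −κ⁻¹, where κ > 0, and let A₁, A₂ ∈ ℝ. On the domain where 1 + (1+κ)Aᵢt ≠ 0 (i = 1,2), define a(t,x) = Σᵢ Aᵢ(eⁱ·x)/(1+(1+κ)Aᵢt) and u(t,x) = Σᵢ κAᵢ(eⁱ·x)eⁱ/(1+(1+κ)Aᵢt). Then (a,u) satisfies a_t + (u·∇)a + κ⁻¹ a div u = 0 and u_t + (u·∇)u + κ a ∇a = 0. -/

import Mathlib

open Function

private lemma hasDerivAt_div_lin (c k t : ℝ) (h : 1 + k * t ≠ 0) :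
    HasDerivAt (fun s => c / (1 + k * s)) (-(c * k) / (1 + k * t) ^ 2) t := by
  have h1 : HasDerivAt (fun s : ℝ => 1 + k * s) k t := by
    simpa using ((hasDerivAt_id t).const_mul k).const_add 1
  simpa using (hasDerivAt_const t c).fun_div h1 h

private lemma sum_update3 (e x : Fin 3 → ℝ) (i : Fin 3) (s : ℝ) :
    ∑ j, e j * Function.update x i s j = (∑ j, e j * x j) + e i * (s - x i) := by
  fin_cases i <;> simp [Fin.sum_univ_three, Function.update] <;> ring

private lemma deriv_affine (p q y : ℝ) : deriv (fun s : ℝ => p * s + q) y = p := by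
  simpa using (((hasDerivAt_id y).const_mul p).add_const q).deriv

set_option maxHeartbeats 1600000 in
theorem rank2_double_wave_E1E2_isentropic (A₁ A₂ κ : ℝ) (hκ : 0 < κ)
    (e₁ e₂ : Fin 3 → ℝ) (he₁ : ∑ i, e₁ i ^ 2 = 1) (he₂ : ∑ i, e₂ i ^ 2 = 1)
    (hangle : ∑ i, e₁ i * e₂ i = -κ⁻¹)
    (a : ℝ → (Fin 3 → ℝ) → ℝ)
    (ha : ∀ t x, a t x =
      A₁ * (∑ i, e₁ i * x i) / (1 + (1 + κ) * A₁ * t)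
        + A₂ * (∑ i, e₂ i * x i) / (1 + (1 + κ) * A₂ * t))
    (u : ℝ → (Fin 3 → ℝ) → Fin 3 → ℝ)
    (hu : ∀ t x j, u t x j =
      κ * A₁ * (∑ i, e₁ i * x i) * e₁ j / (1 + (1 + κ) * A₁ * t)
        + κ * A₂ * (∑ i, e₂ i * x i) * e₂ j / (1 + (1 + κ) * A₂ * t))
    (t : ℝ) (x : Fin 3 → ℝ)
    (hd₁ : 1 + (1 + κ) * A₁ * t ≠ 0) (hd₂ : 1 + (1 + κ) * A₂ * t ≠ 0) :
    (deriv (fun s => a s x) t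
        + ∑ i, u t x i * deriv (fun s => a t (update x i s)) (x i)
        + κ⁻¹ * a t x * ∑ i, deriv (fun s => u t (update x i s) i) (x i) = 0) ∧
    ∀ j, deriv (fun s => u s x j) t
        + ∑ i, u t x i * deriv (fun s => u t (update x i s) j) (x i)
        + κ * a t x * deriv (fun s => a t (update x j s)) (x j) = 0 := by
  have hκ0 : κ ≠ 0 := ne_of_gt hκ
  set S₁ : ℝ := ∑ i, e₁ i * x i with hS₁
  set S₂ : ℝ := ∑ i, e₂ i * x i with hS₂
  set d₁ : ℝ := 1 + (1 + κ) * A₁ * t with hD₁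
  set d₂ : ℝ := 1 + (1 + κ) * A₂ * t with hD₂
  -- time derivative of a
  have DT : deriv (fun s => a s x) t
      = -(A₁ * S₁ * ((1 + κ) * A₁)) / d₁ ^ 2 + -(A₂ * S₂ * ((1 + κ) * A₂)) / d₂ ^ 2 := by
    have hfa : (fun s => a s x)
        = fun s => A₁ * S₁ / (1 + (1 + κ) * A₁ * s) + A₂ * S₂ / (1 + (1 + κ) * A₂ * s) :=
      funext fun s => ha s x
    rw [hfa]
    exact ((hasDerivAt_div_lin (A₁ * S₁) ((1 + κ) * A₁) t hd₁).add
      (hasDerivAt_div_lin (A₂ * S₂) ((1 + κ) * A₂) t hd₂)).deriv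
  -- time derivative of u j
  have DUT : ∀ j, deriv (fun s => u s x j) t
      = -(κ * A₁ * S₁ * e₁ j * ((1 + κ) * A₁)) / d₁ ^ 2
        + -(κ * A₂ * S₂ * e₂ j * ((1 + κ) * A₂)) / d₂ ^ 2 := by
    intro j
    have hfu : (fun s => u s x j)
        = fun s => κ * A₁ * S₁ * e₁ j / (1 + (1 + κ) * A₁ * s)
            + κ * A₂ * S₂ * e₂ j / (1 + (1 + κ) * A₂ * s) :=
      funext fun s => hu s x j
    rw [hfu]
    exact ((hasDerivAt_div_lin (κ * A₁ * S₁ * e₁ j) ((1 + κ) * A₁) t hd₁).add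
      (hasDerivAt_div_lin (κ * A₂ * S₂ * e₂ j) ((1 + κ) * A₂) t hd₂)).deriv
  -- spatial derivative of a
  have DA : ∀ i, deriv (fun s => a t (update x i s)) (x i)
      = A₁ * e₁ i / d₁ + A₂ * e₂ i / d₂ := by
    intro i
    have hf : (fun s => a t (update x i s))
        = fun s => (A₁ * e₁ i / d₁ + A₂ * e₂ i / d₂) * s
            + (A₁ * (S₁ - e₁ i * x i) / d₁ + A₂ * (S₂ - e₂ i * x i) / d₂) := by
      funext s
      rw [ha, sum_update3, sum_update3, ← hS₁, ← hS₂, ← hD₁, ← hD₂]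
      ring
    rw [hf, deriv_affine]
  -- spatial derivative of u
  have DU : ∀ i j, deriv (fun s => u t (update x i s) j) (x i)
      = κ * A₁ * e₁ i * e₁ j / d₁ + κ * A₂ * e₂ i * e₂ j / d₂ := by
    intro i j
    have hf : (fun s => u t (update x i s) j)
        = fun s => (κ * A₁ * e₁ i * e₁ j / d₁ + κ * A₂ * e₂ i * e₂ j / d₂) * s
            + (κ * A₁ * (S₁ - e₁ i * x i) * e₁ j / d₁
                + κ * A₂ * (S₂ - e₂ i * x i) * e₂ j / d₂) := by
      funext s
      rw [hu, sum_update3, sum_update3, ← hS₁, ← hS₂, ← hD₁, ← hD₂]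
      ring
    rw [hf, deriv_affine]
  -- key sum identities
  have key : ∀ p₁ p₂ q₁ q₂ : ℝ,
      ∑ i, (p₁ * e₁ i + p₂ * e₂ i) * (q₁ * e₁ i + q₂ * e₂ i)
        = p₁ * q₁ + p₂ * q₂ - (p₁ * q₂ + p₂ * q₁) * κ⁻¹ := by
    intro p₁ p₂ q₁ q₂
    have h : ∀ i : Fin 3, (p₁ * e₁ i + p₂ * e₂ i) * (q₁ * e₁ i + q₂ * e₂ i)
        = p₁ * q₁ * e₁ i ^ 2 + (p₁ * q₂ + p₂ * q₁) * (e₁ i * e₂ i) + p₂ * q₂ * e₂ i ^ 2 :=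
      fun i => by ring
    simp only [h]
    rw [Finset.sum_add_distrib, Finset.sum_add_distrib, ← Finset.mul_sum, ← Finset.mul_sum,
      ← Finset.mul_sum, he₁, he₂, hangle]
    ring
  clear_value S₁ S₂ d₁ d₂
  have hκκ : κ⁻¹ * κ = 1 := inv_mul_cancel₀ hκ0
  constructor
  · rw [DT, ha t x, ← hS₁, ← hS₂, ← hD₁, ← hD₂]
    simp only [DA, DU]
    simp only [hu, ← hS₁, ← hS₂, ← hD₁, ← hD₂]
    have h1 : (∑ i : Fin 3, (κ * A₁ * S₁ * e₁ i / d₁ + κ * A₂ * S₂ * e₂ i / d₂)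
          * (A₁ * e₁ i / d₁ + A₂ * e₂ i / d₂))
        = (κ * A₁ * S₁ / d₁) * (A₁ / d₁) + (κ * A₂ * S₂ / d₂) * (A₂ / d₂)
          - ((κ * A₁ * S₁ / d₁) * (A₂ / d₂) + (κ * A₂ * S₂ / d₂) * (A₁ / d₁)) * κ⁻¹ := by
      rw [← key (κ * A₁ * S₁ / d₁) (κ * A₂ * S₂ / d₂) (A₁ / d₁) (A₂ / d₂)]
      exact Finset.sum_congr rfl fun i _ => by ring
    have h2 : (∑ i : Fin 3, (κ * A₁ * e₁ i * e₁ i / d₁ + κ * A₂ * e₂ i * e₂ i / d₂))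
        = κ * A₁ / d₁ + κ * A₂ / d₂ := by
      have hpt : ∀ i : Fin 3, κ * A₁ * e₁ i * e₁ i / d₁ + κ * A₂ * e₂ i * e₂ i / d₂
          = (κ * A₁ / d₁) * e₁ i ^ 2 + (κ * A₂ / d₂) * e₂ i ^ 2 := fun i => by ring
      simp only [hpt]
      rw [Finset.sum_add_distrib, ← Finset.mul_sum, ← Finset.mul_sum, he₁, he₂]
      ring
    rw [h1, h2]
    linear_combination (A₁ ^ 2 * S₁ / d₁ ^ 2 + A₂ ^ 2 * S₂ / d₂ ^ 2) * hκκ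
  · intro j
    rw [DUT j, ha t x, DA j, ← hS₁, ← hS₂, ← hD₁, ← hD₂]
    simp only [DU]
    simp only [hu, ← hS₁, ← hS₂, ← hD₁, ← hD₂]
    have h3 : (∑ i : Fin 3, (κ * A₁ * S₁ * e₁ i / d₁ + κ * A₂ * S₂ * e₂ i / d₂)
          * (κ * A₁ * e₁ i * e₁ j / d₁ + κ * A₂ * e₂ i * e₂ j / d₂))
        = (κ * A₁ * S₁ / d₁) * (κ * A₁ * e₁ j / d₁) + (κ * A₂ * S₂ / d₂) * (κ * A₂ * e₂ j / d₂)
          - ((κ * A₁ * S₁ / d₁) * (κ * A₂ * e₂ j / d₂)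
              + (κ * A₂ * S₂ / d₂) * (κ * A₁ * e₁ j / d₁)) * κ⁻¹ := by
      rw [← key (κ * A₁ * S₁ / d₁) (κ * A₂ * S₂ / d₂) (κ * A₁ * e₁ j / d₁) (κ * A₂ * e₂ j / d₂)]
      exact Finset.sum_congr rfl fun i _ => by ring
    rw [h3]
    linear_combination (-(κ * A₁ * A₂ * (S₁ * e₂ j + S₂ * e₁ j) / (d₁ * d₂))) * hκκ
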